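/- arXiv:2510.00942 — 2 statements merged into one kernel-verified Lean document; each statement's English description precedes it below -/
import Mathlib

section
/- Let Ω₀ be positive definite, Δ positive semidefinite, and suppose all eigenvalues of Ω₀ + Δ are at most λ_max. Then tr(Ω₀⁻¹) − tr((Ω₀+Δ)⁻¹) ≥ tr(Δ) / λ_max², i.e., the marginal decrease in MSE from adding information matrix Δ is bounded below by tr(Δ) divided by the square of the largest eigenvalue of the augmented matrix. -/
open Matrix

private lemma trace_psd_nonneg {m : Type*} [Fintype m] {A : Matrix m m ℝ}
    (hA : A.PosSemidef) : 0 ≤ A.trace := by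
  classical
  open scoped MatrixOrder in
  obtain ⟨B, hBe⟩ := CStarAlgebra.nonneg_iff_eq_star_mul_self.mp hA.nonneg
  rw [star_eq_conjTranspose] at hBe
  subst hBe
  rw [Matrix.trace]
  refine Finset.sum_nonneg fun i _ => ?_
  rw [Matrix.diag_apply, Matrix.mul_apply]
  refine Finset.sum_nonneg fun j _ => ?_
  simp only [Matrix.conjTranspose_apply, RCLike.star_def, starRingEnd_apply, star_trivial]
  exact mul_self_nonneg _

private lemma trace_mul_psd_nonneg {m : Type*} [Fintype m] {P Q : Matrix m m ℝ}
    (hP : P.PosSemidef) (hQ : Q.PosSemidef) : 0 ≤ (P * Q).trace := by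
  classical
  open scoped MatrixOrder in
  obtain ⟨Y, hYe⟩ := CStarAlgebra.nonneg_iff_eq_star_mul_self.mp hQ.nonneg
  rw [star_eq_conjTranspose] at hYe
  subst hYe
  have h : (P * (Yᴴ * Y)).trace = (Y * P * Yᴴ).trace := by
    rw [← Matrix.mul_assoc, Matrix.trace_mul_comm, ← Matrix.mul_assoc]
  rw [h]
  exact trace_psd_nonneg (hP.mul_mul_conjTranspose_same Y)

theorem marginal_mse_gain_lower_bound {n : ℕ} (Ω₀ Δ : Matrix (Fin n) (Fin n) ℝ)
    (hΩ : Ω₀.PosDef) (hΔ : Δ.PosSemidef) (lmax : ℝ) (hlmax : 0 < lmax)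
    (hub : (lmax • (1 : Matrix (Fin n) (Fin n) ℝ) - (Ω₀ + Δ)).PosSemidef) :
    Δ.trace / lmax ^ 2 ≤ (Ω₀⁻¹).trace - ((Ω₀ + Δ)⁻¹).trace := by
  set A := Ω₀ with hAdef
  set B := Ω₀ + Δ with hBdef
  have hB : B.PosDef := hΩ.add_posSemidef hΔ
  have hAd : IsUnit A.det := isUnit_iff_ne_zero.mpr hΩ.det_pos.ne'
  have hBd : IsUnit B.det := isUnit_iff_ne_zero.mpr hB.det_pos.ne'
  have hAA : A * A⁻¹ = 1 := Matrix.mul_nonsing_inv A hAd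
  have hAA' : A⁻¹ * A = 1 := Matrix.nonsing_inv_mul A hAd
  have hBB : B * B⁻¹ = 1 := Matrix.mul_nonsing_inv B hBd
  have hBB' : B⁻¹ * B = 1 := Matrix.nonsing_inv_mul B hBd
  have hΔeq : Δ = B - A := by rw [hBdef]; abel
  have hAinv : (A⁻¹).PosDef := hΩ.inv
  have hBinv : (B⁻¹).PosDef := hB.inv
  -- key identities
  have h1 : B⁻¹ * Δ * A⁻¹ = A⁻¹ - B⁻¹ := by
    rw [hΔeq, Matrix.mul_sub, Matrix.sub_mul, hBB']
    rw [Matrix.mul_assoc, hAA, Matrix.mul_one, Matrix.one_mul]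
  have h2 : A⁻¹ * Δ * B⁻¹ = A⁻¹ - B⁻¹ := by
    rw [hΔeq, Matrix.mul_sub, Matrix.sub_mul, hAA']
    rw [Matrix.mul_assoc, hBB, Matrix.mul_one, Matrix.one_mul]
  have hkey : A⁻¹ - B⁻¹ = B⁻¹ * Δ * B⁻¹ + B⁻¹ * Δ * (A⁻¹ * Δ * B⁻¹) := by
    calc A⁻¹ - B⁻¹ = B⁻¹ * Δ * A⁻¹ := h1.symm
      _ = B⁻¹ * Δ * (B⁻¹ + (A⁻¹ * Δ * B⁻¹)) := by rw [h2]; congr 1; abel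
      _ = B⁻¹ * Δ * B⁻¹ + B⁻¹ * Δ * (A⁻¹ * Δ * B⁻¹) := by rw [Matrix.mul_add]
  -- second term nonneg
  have hterm2 : 0 ≤ (B⁻¹ * Δ * (A⁻¹ * Δ * B⁻¹)).trace := by
    have e : B⁻¹ * Δ * (A⁻¹ * Δ * B⁻¹) = (Δ * B⁻¹)ᴴ * A⁻¹ * (Δ * B⁻¹) := by
      rw [Matrix.conjTranspose_mul, hΔ.isHermitian.eq, hBinv.isHermitian.eq]
      simp only [Matrix.mul_assoc]
    rw [e]
    exact trace_psd_nonneg (hAinv.posSemidef.conjTranspose_mul_mul_same (Δ * B⁻¹))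
  -- sqrt of B
  open scoped MatrixOrder in
  set s := CFC.sqrt B with hsdef
  have hs : s * s = B := by
    open scoped MatrixOrder in exact CFC.sqrt_mul_sqrt_self B hB.posSemidef.nonneg
  have hsH : sᴴ = s := by
    open scoped MatrixOrder in exact (CFC.sqrt_nonneg B).posSemidef.isHermitian.eq
  set C := lmax • (1 : Matrix (Fin n) (Fin n) ℝ) - B with hCdef
  have hCH : Cᴴ = C := hub.isHermitian.eq
  have hss : s * B * s = B * B := by rw [← hs]; simp only [Matrix.mul_assoc]
  have hCs : sᴴ * C * s = lmax • B - B * B := by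
    rw [hsH, hCdef, Matrix.mul_sub, Matrix.sub_mul, Matrix.mul_smul, Matrix.smul_mul,
      Matrix.mul_one, hs, hss]
  have hCC : Cᴴ * C = (lmax ^ 2) • (1 : Matrix (Fin n) (Fin n) ℝ) - lmax • B - lmax • B + B * B := by
    rw [hCH, hCdef]
    simp only [Matrix.sub_mul, Matrix.mul_sub, Matrix.smul_mul, Matrix.mul_smul,
      Matrix.one_mul, Matrix.mul_one, smul_sub, smul_smul]
    rw [show lmax * lmax = lmax ^ 2 from (pow_two lmax).symm]
    abel
  have step1 : ((lmax ^ 2) • (1 : Matrix (Fin n) (Fin n) ℝ) - B * B).PosSemidef := by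
    have e : (lmax ^ 2) • (1 : Matrix (Fin n) (Fin n) ℝ) - B * B
        = Cᴴ * C + (sᴴ * C * s + sᴴ * C * s) := by
      rw [hCC, hCs]; abel
    rw [e]
    exact (Matrix.posSemidef_conjTranspose_mul_self C).add
      ((hub.conjTranspose_mul_mul_same s).add (hub.conjTranspose_mul_mul_same s))
  have step2 : ((lmax ^ 2) • (B⁻¹ * B⁻¹) - 1).PosSemidef := by
    have e2 : B⁻¹ * (B * B) * B⁻¹ = 1 := by
      rw [← Matrix.mul_assoc, hBB', Matrix.one_mul, hBB]
    have e : (lmax ^ 2) • (B⁻¹ * B⁻¹) - 1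
        = (B⁻¹)ᴴ * ((lmax ^ 2) • (1 : Matrix (Fin n) (Fin n) ℝ) - B * B) * B⁻¹ := by
      rw [hBinv.isHermitian.eq, Matrix.mul_sub, Matrix.sub_mul, Matrix.mul_smul,
        Matrix.smul_mul, Matrix.mul_one, e2]
    rw [e]
    exact step1.conjTranspose_mul_mul_same B⁻¹
  -- trace bound for first term
  have h3 : 0 ≤ (Δ * ((lmax ^ 2) • (B⁻¹ * B⁻¹) - 1)).trace :=
    trace_mul_psd_nonneg hΔ step2
  have h4 : (Δ * ((lmax ^ 2) • (B⁻¹ * B⁻¹) - 1)).trace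
      = lmax ^ 2 * (Δ * (B⁻¹ * B⁻¹)).trace - Δ.trace := by
    rw [Matrix.mul_sub, Matrix.mul_smul, Matrix.mul_one, Matrix.trace_sub, Matrix.trace_smul,
      smul_eq_mul]
  have h5 : Δ.trace ≤ lmax ^ 2 * (Δ * (B⁻¹ * B⁻¹)).trace := by rw [h4] at h3; linarith
  have h6 : (B⁻¹ * Δ * B⁻¹).trace = (Δ * (B⁻¹ * B⁻¹)).trace := by
    rw [Matrix.trace_mul_cycle, Matrix.trace_mul_comm (B⁻¹ * B⁻¹) Δ]
  have htr : (A⁻¹).trace - (B⁻¹).trace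
      = (B⁻¹ * Δ * B⁻¹).trace + (B⁻¹ * Δ * (A⁻¹ * Δ * B⁻¹)).trace := by
    rw [← Matrix.trace_sub, ← Matrix.trace_add, ← hkey]
  have hl2 : (0:ℝ) < lmax ^ 2 := by positivity
  rw [div_le_iff₀ hl2]
  rw [htr] at *
  nlinarith [h5, hterm2, h6]
end

section
/- Let A and B be symmetric positive definite n×n matrices with A ⪯ B, and suppose λ_min · I ⪯ A and B ⪯ λ_max · I where 0 < λ_min ≤ λ_max. If rank(B − A) ≤ k, then tr(A⁻¹) − tr(B⁻¹) ≤ k · (λ_max − λ_min)/(λ_min · λ_max). -/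
open Matrix

private lemma matInv_sub_inv {n : ℕ} {X Y : Matrix (Fin n) (Fin n) ℝ}
    (hX : IsUnit X) (hY : IsUnit Y) :
    Y⁻¹ * (Y - X) * X⁻¹ = X⁻¹ - Y⁻¹ := by
  rw [Matrix.mul_sub, Matrix.nonsing_inv_mul _ ((Matrix.isUnit_iff_isUnit_det _).mp hY),
    Matrix.sub_mul, one_mul, mul_assoc, Matrix.mul_nonsing_inv _
      ((Matrix.isUnit_iff_isUnit_det _).mp hX), mul_one]

private lemma matInv_sub_inv' {n : ℕ} {X Y : Matrix (Fin n) (Fin n) ℝ}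
    (hX : IsUnit X) (hY : IsUnit Y) :
    X⁻¹ * (Y - X) * Y⁻¹ = X⁻¹ - Y⁻¹ := by
  rw [Matrix.mul_sub, Matrix.nonsing_inv_mul _ ((Matrix.isUnit_iff_isUnit_det _).mp hX),
    Matrix.sub_mul, one_mul, mul_assoc, Matrix.mul_nonsing_inv _
      ((Matrix.isUnit_iff_isUnit_det _).mp hY), mul_one]

/-- Loewner inverse antitonicity. -/
private lemma psd_inv_sub_inv {n : ℕ} {X Y : Matrix (Fin n) (Fin n) ℝ}
    (hX : X.PosDef) (hY : Y.PosDef) (h : (Y - X).PosSemidef) :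
    (X⁻¹ - Y⁻¹).PosSemidef := by
  have e1 : Y⁻¹ * (Y - X) * X⁻¹ = X⁻¹ - Y⁻¹ := matInv_sub_inv hX.isUnit hY.isUnit
  have e2 : X⁻¹ * (Y - X) * Y⁻¹ = X⁻¹ - Y⁻¹ := matInv_sub_inv' hX.isUnit hY.isUnit
  have hT1 : ((Y⁻¹)ᴴ * (Y - X) * Y⁻¹).PosSemidef := h.conjTranspose_mul_mul_same Y⁻¹
  have hT2 : (((Y - X) * Y⁻¹)ᴴ * X⁻¹ * ((Y - X) * Y⁻¹)).PosSemidef :=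
    hX.inv.posSemidef.conjTranspose_mul_mul_same _
  have hc : ((Y - X) * Y⁻¹)ᴴ = Y⁻¹ * (Y - X) := by
    rw [conjTranspose_mul, h.1, hY.isHermitian.inv]
  rw [hc] at hT2
  rw [hY.isHermitian.inv] at hT1
  have key : Y⁻¹ * (Y - X) * Y⁻¹ + Y⁻¹ * (Y - X) * X⁻¹ * ((Y - X) * Y⁻¹) = X⁻¹ - Y⁻¹ := by
    have h3 : Y⁻¹ * (Y - X) * X⁻¹ * ((Y - X) * Y⁻¹)
        = Y⁻¹ * (Y - X) * (X⁻¹ * (Y - X) * Y⁻¹) := by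
      simp only [mul_assoc]
    rw [h3, e2, show Y⁻¹ * (Y - X) * (X⁻¹ - Y⁻¹)
        = Y⁻¹ * (Y - X) * X⁻¹ - Y⁻¹ * (Y - X) * Y⁻¹ from mul_sub _ _ _, e1]
    abel
  rw [← key]
  exact hT1.add hT2

/-- If a symmetric matrix has rank ≤ k and all its eigenvalues are ≤ c (expressed as
`c • 1 - M` PSD) with `0 ≤ c`, then its trace is at most `k * c`. -/
private lemma trace_le_of_rank_le {n k : ℕ} {M : Matrix (Fin n) (Fin n) ℝ} {c : ℝ}
    (hM : M.IsHermitian) (hc : 0 ≤ c)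
    (hpsd : (c • (1 : Matrix (Fin n) (Fin n) ℝ) - M).PosSemidef)
    (hrank : M.rank ≤ k) : M.trace ≤ (k : ℝ) * c := by
  classical
  have htr : M.trace = ∑ i, hM.eigenvalues i := by
    rw [hM.trace_eq_sum_eigenvalues]
    simp
  have hev : ∀ i, hM.eigenvalues i ≤ c := by
    intro i
    have hv := hM.mulVec_eigenvectorBasis i
    set v : Fin n → ℝ := ⇑(hM.eigenvectorBasis i) with hvdef
    have hvv : dotProduct v v = 1 := by
      have horth := hM.eigenvectorBasis.orthonormal
      rw [orthonormal_iff_ite] at horth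
      have := horth i i
      rw [if_pos rfl] at this
      simp only [PiLp.inner_apply, RCLike.inner_apply, conj_trivial] at this
      simpa [dotProduct, v, mul_comm] using this
    have h2 := hpsd.dotProduct_mulVec_nonneg v
    rw [Matrix.sub_mulVec, Matrix.smul_mulVec, Matrix.one_mulVec, hv] at h2
    have : dotProduct (star v) (c • v - hM.eigenvalues i • v)
        = c - hM.eigenvalues i := by
      simp [dotProduct_sub, dotProduct_smul, star_trivial, hvv]
    rw [this] at h2
    linarith
  rw [htr, ← Finset.sum_filter_ne_zero Finset.univ (f := hM.eigenvalues)]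
  have hcard : (Finset.univ.filter (fun i => hM.eigenvalues i ≠ 0)).card ≤ k := by
    have := hM.rank_eq_card_non_zero_eigs
    rw [Fintype.card_subtype] at this
    omega
  calc ∑ i ∈ Finset.univ.filter (fun i => hM.eigenvalues i ≠ 0), hM.eigenvalues i
      ≤ (Finset.univ.filter (fun i => hM.eigenvalues i ≠ 0)).card • c :=
        Finset.sum_le_card_nsmul _ _ _ (fun i _ => hev i)
    _ = ((Finset.univ.filter (fun i => hM.eigenvalues i ≠ 0)).card : ℝ) * c := by
        rw [nsmul_eq_mul]
    _ ≤ (k : ℝ) * c := by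
        apply mul_le_mul_of_nonneg_right _ hc
        exact_mod_cast hcard

private lemma posDef_smul_one {n : ℕ} {l : ℝ} (hl : 0 < l) :
    (l • (1 : Matrix (Fin n) (Fin n) ℝ)).PosDef := by
  refine Matrix.PosDef.of_dotProduct_mulVec_pos ?_ ?_
  · simp [Matrix.IsHermitian, conjTranspose_smul]
  · intro x hx
    rw [Matrix.smul_mulVec, Matrix.one_mulVec, dotProduct_smul]
    exact smul_pos hl (Matrix.dotProduct_star_self_pos_iff.mpr hx)

private lemma inv_smul_one {n : ℕ} {l : ℝ} (hl : l ≠ 0) :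
    (l • (1 : Matrix (Fin n) (Fin n) ℝ))⁻¹ = l⁻¹ • 1 := by
  apply Matrix.inv_eq_right_inv
  rw [smul_mul_smul_comm, mul_inv_cancel₀ hl, one_mul, one_smul]

theorem trace_inv_diff_rank_bound {n : ℕ} (A B : Matrix (Fin n) (Fin n) ℝ)
    (k : ℕ) (lmin lmax : ℝ)
    (hA : A.PosDef) (hB : B.PosDef) (hAB : (B - A).PosSemidef)
    (hrank : (B - A).rank ≤ k)
    (hmin : (A - lmin • (1 : Matrix (Fin n) (Fin n) ℝ)).PosSemidef)
    (hmax : (lmax • (1 : Matrix (Fin n) (Fin n) ℝ) - B).PosSemidef)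
    (h0 : 0 < lmin) (hle : lmin ≤ lmax) :
    (A⁻¹).trace - (B⁻¹).trace ≤ (k : ℝ) * (lmax - lmin) / (lmin * lmax) := by
  have h0' : (0 : ℝ) < lmax := lt_of_lt_of_le h0 hle
  set M : Matrix (Fin n) (Fin n) ℝ := A⁻¹ - B⁻¹ with hMdef
  set c : ℝ := lmin⁻¹ - lmax⁻¹ with hcdef
  have hc : 0 ≤ c := by
    have := inv_anti₀ h0 hle
    simp only [hcdef, sub_nonneg]
    exact this
  have hMH : M.IsHermitian := (hA.isHermitian.inv).sub (hB.isHermitian.inv)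
  -- rank bound
  have hMrank : M.rank ≤ k := by
    have e1 : B⁻¹ * (B - A) * A⁻¹ = A⁻¹ - B⁻¹ := matInv_sub_inv hA.isUnit hB.isUnit
    calc M.rank = (B⁻¹ * (B - A) * A⁻¹).rank := by rw [e1]
      _ ≤ (B⁻¹ * (B - A)).rank := Matrix.rank_mul_le_left _ _
      _ ≤ (B - A).rank := Matrix.rank_mul_le_right _ _
      _ ≤ k := hrank
  -- c • 1 - M PSD
  have hpsd : (c • (1 : Matrix (Fin n) (Fin n) ℝ) - M).PosSemidef := by
    have hP1 : ((lmin • (1 : Matrix (Fin n) (Fin n) ℝ))⁻¹ - A⁻¹).PosSemidef :=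
      psd_inv_sub_inv (posDef_smul_one h0) hA hmin
    have hP2 : (B⁻¹ - (lmax • (1 : Matrix (Fin n) (Fin n) ℝ))⁻¹).PosSemidef :=
      psd_inv_sub_inv hB (posDef_smul_one h0') hmax
    rw [inv_smul_one h0.ne'] at hP1
    rw [inv_smul_one h0'.ne'] at hP2
    have : c • (1 : Matrix (Fin n) (Fin n) ℝ) - M
        = (lmin⁻¹ • 1 - A⁻¹) + (B⁻¹ - lmax⁻¹ • 1) := by
      rw [hcdef, hMdef, sub_smul]
      abel
    rw [this]
    exact hP1.add hP2
  have hmain := trace_le_of_rank_le hMH hc hpsd hMrank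
  rw [hMdef, Matrix.trace_sub] at hmain
  have heq : (k : ℝ) * c = (k : ℝ) * (lmax - lmin) / (lmin * lmax) := by
    rw [hcdef]
    field_simp
  linarith [heq ▸ hmain]
end
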